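/- Let Z and W be compact Hausdorff topological spaces, let Y be a finite index type, and for each y ∈ Y let λ_y : W → Z be a continuous map and q_y : W → M_s(ℂ) a continuous map such that for every w ∈ W: each q_y(w) is a self-adjoint idempotent (a projection), q_y(w)·q_{y'}(w) = 0 whenever y ≠ y', and Σ_{y∈Y} q_y(w) = 1. Then the generalized diagonal map φ : C(Z, M_r(ℂ)) → C(W, M_r(ℂ) ⊗ M_s(ℂ)) defined by φ(a)(w) = Σ_{y∈Y} a(λ_y(w)) ⊗ q_y(w) is well defined (each φ(a) is continuous) and is a unital star-algebra homomorphism: it is ℂ-linear, multiplicative, star-preserving, and maps the constant function 1 to the constant function 1. -/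

import Mathlib

open Kronecker Matrix

lemma kron_conjTranspose {r s : ℕ} (A : Matrix (Fin r) (Fin r) ℂ)
    (B : Matrix (Fin s) (Fin s) ℂ) : (A ⊗ₖ B)ᴴ = Aᴴ ⊗ₖ Bᴴ := by
  ext ⟨i, j⟩ ⟨k, l⟩
  simp [Matrix.conjTranspose_apply, Matrix.kroneckerMap_apply, mul_comm]

lemma kron_cont {W : Type*} [TopologicalSpace W] {r s : ℕ}
    {A : W → Matrix (Fin r) (Fin r) ℂ} {B : W → Matrix (Fin s) (Fin s) ℂ}
    (hA : Continuous A) (hB : Continuous B) :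
    Continuous (fun w => (A w) ⊗ₖ (B w)) := by
  apply continuous_matrix
  rintro ⟨i, j⟩ ⟨k, l⟩
  exact (hA.matrix_elem i k).mul (hB.matrix_elem j l)

/-- The generalized diagonal map
`φ(a)(w) = Σ_{y ∈ Y} a(λ_y(w)) ⊗ q_y(w)` from `C(Z, M_r(ℂ))` to
`C(W, M_r(ℂ) ⊗ M_s(ℂ))` is well defined (each `φ(a)` is continuous) and is a
unital star-algebra homomorphism. -/
theorem stmt_0 (Z W : Type*) [TopologicalSpace Z] [CompactSpace Z] [T2Space Z]
    [TopologicalSpace W] [CompactSpace W] [T2Space W]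
    (Y : Type*) [Fintype Y] (r s : ℕ)
    (lam : Y → C(W, Z)) (q : Y → C(W, Matrix (Fin s) (Fin s) ℂ))
    (hproj : ∀ y w, IsSelfAdjoint (q y w) ∧ q y w * q y w = q y w)
    (horth : ∀ y y' w, y ≠ y' → q y w * q y' w = 0)
    (hsum : ∀ w, ∑ y, q y w = 1) :
    (∀ a : C(Z, Matrix (Fin r) (Fin r) ℂ),
      Continuous (fun w => ∑ y, (a (lam y w)) ⊗ₖ (q y w))) ∧
    ∃ φ : C(Z, Matrix (Fin r) (Fin r) ℂ) →
          C(W, Matrix (Fin r × Fin s) (Fin r × Fin s) ℂ),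
      (∀ a w, φ a w = ∑ y, (a (lam y w)) ⊗ₖ (q y w)) ∧
      (∀ (c : ℂ) a, φ (c • a) = c • φ a) ∧
      (∀ a b, φ (a + b) = φ a + φ b) ∧
      (∀ a b, φ (a * b) = φ a * φ b) ∧
      (∀ a, φ (star a) = star (φ a)) ∧
      φ 1 = 1 := by
  have hcont : ∀ a : C(Z, Matrix (Fin r) (Fin r) ℂ),
      Continuous (fun w => ∑ y, (a (lam y w)) ⊗ₖ (q y w)) := by
    intro a
    apply continuous_finset_sum
    intro y _
    exact kron_cont (a.continuous.comp (lam y).continuous) (q y).continuous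
  refine ⟨hcont, ⟨fun a => ⟨_, hcont a⟩, fun a w => rfl, ?_, ?_, ?_, ?_, ?_⟩⟩
  · intro c a
    ext w : 1
    show ∑ y, ((c • a) (lam y w)) ⊗ₖ (q y w) = c • ∑ y, (a (lam y w)) ⊗ₖ (q y w)
    rw [Finset.smul_sum]
    exact Finset.sum_congr rfl fun y _ => by
      show (c • a (lam y w)) ⊗ₖ (q y w) = _
      rw [Matrix.smul_kronecker]
  · intro a b
    ext w : 1
    show ∑ y, ((a + b) (lam y w)) ⊗ₖ (q y w)
      = (∑ y, (a (lam y w)) ⊗ₖ (q y w)) + ∑ y, (b (lam y w)) ⊗ₖ (q y w)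
    rw [← Finset.sum_add_distrib]
    exact Finset.sum_congr rfl fun y _ => by
      show (a (lam y w) + b (lam y w)) ⊗ₖ (q y w) = _
      rw [Matrix.add_kronecker]
  · intro a b
    ext w : 1
    show ∑ y, ((a * b) (lam y w)) ⊗ₖ (q y w)
      = (∑ y, (a (lam y w)) ⊗ₖ (q y w)) * ∑ y, (b (lam y w)) ⊗ₖ (q y w)
    rw [Finset.sum_mul_sum]
    refine Finset.sum_congr rfl fun y _ => ?_
    rw [Finset.sum_eq_single y]
    · show (a (lam y w) * b (lam y w)) ⊗ₖ (q y w) = _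
      rw [← Matrix.mul_kronecker_mul, (hproj y w).2]
    · intro y' _ hy'
      rw [← Matrix.mul_kronecker_mul, horth y y' w (Ne.symm hy'), Matrix.kronecker_zero]
    · intro h; exact absurd (Finset.mem_univ y) h
  · intro a
    ext w : 1
    show ∑ y, ((star a) (lam y w)) ⊗ₖ (q y w) = star (∑ y, (a (lam y w)) ⊗ₖ (q y w))
    rw [star_sum]
    refine Finset.sum_congr rfl fun y _ => ?_
    rw [show (star a) (lam y w) = (a (lam y w))ᴴ from rfl,
      Matrix.star_eq_conjTranspose, kron_conjTranspose,
      show (q y w)ᴴ = star (q y w) from rfl, (hproj y w).1.star_eq]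
  · ext w : 1
    show ∑ y, ((1 : C(Z, Matrix (Fin r) (Fin r) ℂ)) (lam y w)) ⊗ₖ (q y w) = 1
    have h1 : ∀ y, ((1 : C(Z, Matrix (Fin r) (Fin r) ℂ)) (lam y w)) ⊗ₖ (q y w)
        = (1 : Matrix (Fin r) (Fin r) ℂ) ⊗ₖ (q y w) := fun y => rfl
    have h2 : ∑ y, (1 : Matrix (Fin r) (Fin r) ℂ) ⊗ₖ (q y w)
        = (1 : Matrix (Fin r) (Fin r) ℂ) ⊗ₖ (∑ y, q y w) := by
      classical
      induction (Finset.univ : Finset Y) using Finset.induction with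
      | empty => simp [Matrix.kronecker_zero]
      | insert _ _ hx ih => simp_all [Finset.sum_insert hx, Matrix.kronecker_add]
    simp_rw [h1]
    rw [h2, hsum, Matrix.one_kronecker_one]
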